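/- Let f have gradient Lipschitz continuous with constant L_f and let L > L_f. If x^{k+1} = H_K(x^k - (1/L)(∇f(x^k) + ε^k)) with x^0 K-sparse, then for all k ≥ 0: f(x^k) - f(x^{k+1}) ≥ ((L - L_f)/2)‖x^k - x^{k+1}‖² - (x^k - x^{k+1})ᵀ ε^k. -/

import Mathlib

noncomputable section

open scoped RealInnerProductSpace

/-- A vector is `K`-sparse if it has at most `K` nonzero entries. -/
def sparse {N : ℕ} (K : ℕ) (x : EuclideanSpace ℝ (Fin N)) : Prop :=
  (Finset.univ.filter fun i => x i ≠ 0).card ≤ K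

/-- `IsHT K z x` means `x` is a result of hard thresholding `z`: a `K`-sparse vector
closest to `z` (ties broken arbitrarily). -/
def IsHT {N : ℕ} (K : ℕ) (z x : EuclideanSpace ℝ (Fin N)) : Prop :=
  sparse K x ∧ ∀ v : EuclideanSpace ℝ (Fin N), sparse K v → ‖x - z‖ ≤ ‖v - z‖

lemma descent_lemma {N : ℕ} (f : EuclideanSpace ℝ (Fin N) → ℝ) (Lf : ℝ)
    (hf : ContDiff ℝ 1 f)
    (hlip : ∀ x y, ‖gradient f x - gradient f y‖ ≤ Lf * ‖x - y‖)
    (x y : EuclideanSpace ℝ (Fin N)) :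
    f y ≤ f x + ⟪gradient f x, y - x⟫ + Lf / 2 * ‖y - x‖ ^ 2 := by
  set d := y - x with hd
  have hdiff : Differentiable ℝ f := hf.differentiable one_ne_zero
  have hgrad : ∀ p v : EuclideanSpace ℝ (Fin N),
      (fderiv ℝ f p) v = ⟪gradient f p, v⟫ := by
    intro p v
    have h1 : HasFDerivAt f (InnerProductSpace.toDual ℝ _ (gradient f p)) p :=
      (hdiff p).hasGradientAt.hasFDerivAt
    rw [h1.fderiv]
    simp [InnerProductSpace.toDual_apply_apply]
  have hcont : Continuous (gradient f) := by
    have : Continuous (fderiv ℝ f) := hf.continuous_fderiv one_ne_zero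
    exact ((InnerProductSpace.toDual ℝ _).symm.continuous).comp this
  have hderiv : ∀ t : ℝ, HasDerivAt (fun t : ℝ => f (x + t • d))
      ⟪gradient f (x + t • d), d⟫ t := by
    intro t
    have hc : HasDerivAt (fun t : ℝ => x + t • d) d t := by
      simpa using ((hasDerivAt_id t).smul_const d).const_add x
    have := (hdiff (x + t • d)).hasFDerivAt.comp_hasDerivAt t hc
    rw [hgrad] at this; exact this
  have hintcont : Continuous fun t : ℝ => ⟪gradient f (x + t • d), d⟫ := by
    exact (hcont.comp (by continuity)).inner continuous_const
  have hFTC : f (x + (1:ℝ) • d) - f (x + (0:ℝ) • d) =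
      ∫ t in (0:ℝ)..1, ⟪gradient f (x + t • d), d⟫ := by
    rw [intervalIntegral.integral_eq_sub_of_hasDerivAt (fun t _ => hderiv t)
      (hintcont.intervalIntegrable 0 1)]
  simp only [one_smul, zero_smul, add_zero] at hFTC
  have hxy : x + d = y := by rw [hd]; abel
  rw [hxy] at hFTC
  have hbound : ∀ t ∈ Set.Icc (0:ℝ) 1,
      ⟪gradient f (x + t • d), d⟫ ≤ ⟪gradient f x, d⟫ + Lf * t * ‖d‖ ^ 2 := by
    intro t ht
    have h1 : ⟪gradient f (x + t • d) - gradient f x, d⟫ ≤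
        ‖gradient f (x + t • d) - gradient f x‖ * ‖d‖ :=
      real_inner_le_norm _ _
    have h2 : ‖gradient f (x + t • d) - gradient f x‖ ≤ Lf * (t * ‖d‖) := by
      have := hlip (x + t • d) x
      simpa [norm_smul, abs_of_nonneg ht.1] using this
    have h3 : ‖gradient f (x + t • d) - gradient f x‖ * ‖d‖ ≤ Lf * (t * ‖d‖) * ‖d‖ :=
      mul_le_mul_of_nonneg_right h2 (norm_nonneg _)
    have h4 : ⟪gradient f (x + t • d) - gradient f x, d⟫ =
        ⟪gradient f (x + t • d), d⟫ - ⟪gradient f x, d⟫ := by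
      rw [inner_sub_left]
    nlinarith [h1, h3, h4]
  have hint_le : (∫ t in (0:ℝ)..1, ⟪gradient f (x + t • d), d⟫) ≤
      ∫ t in (0:ℝ)..1, (⟪gradient f x, d⟫ + Lf * t * ‖d‖ ^ 2) := by
    apply intervalIntegral.integral_mono_on (by norm_num)
      (hintcont.intervalIntegrable 0 1)
      ((by fun_prop : Continuous fun t : ℝ => ⟪gradient f x, d⟫ + Lf * t * ‖d‖ ^ 2).intervalIntegrable 0 1)
    exact hbound
  have hint_val : (∫ t in (0:ℝ)..1, (⟪gradient f x, d⟫ + Lf * t * ‖d‖ ^ 2)) =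
      ⟪gradient f x, d⟫ + Lf / 2 * ‖d‖ ^ 2 := by
    rw [intervalIntegral.integral_add (intervalIntegrable_const)
      ((by fun_prop : Continuous fun t : ℝ => Lf * t * ‖d‖ ^ 2).intervalIntegrable 0 1)]
    simp only [intervalIntegral.integral_const, smul_eq_mul]
    have : (∫ t in (0:ℝ)..1, Lf * t * ‖d‖ ^ 2) = Lf * ‖d‖^2 * ∫ t in (0:ℝ)..1, t := by
      rw [← intervalIntegral.integral_const_mul]
      congr 1; ext t; ring
    rw [this, integral_id]
    ring
  have := hFTC ▸ (hint_val ▸ hint_le)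
  linarith

/-- Sufficient-decrease inequality for inexact IHT: if `∇f` is `L_f`-Lipschitz, `L > L_f`,
and `x^{k+1} = H_K(x^k - (1/L)(∇f(x^k) + ε^k))` with `x^0` `K`-sparse, then
`f(x^k) - f(x^{k+1}) ≥ ((L-L_f)/2)‖x^k - x^{k+1}‖² - ⟪x^k - x^{k+1}, ε^k⟫`. -/
theorem stmt2 {N : ℕ} (K : ℕ) (f : EuclideanSpace ℝ (Fin N) → ℝ) (Lf L : ℝ)
    (hf : ContDiff ℝ 1 f)
    (hlip : ∀ x y, ‖gradient f x - gradient f y‖ ≤ Lf * ‖x - y‖)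
    (hL : Lf < L)
    (x ε : ℕ → EuclideanSpace ℝ (Fin N))
    (h0 : sparse K (x 0))
    (hit : ∀ k, IsHT K (x k - (1 / L) • (gradient f (x k) + ε k)) (x (k + 1))) :
    ∀ k, f (x k) - f (x (k + 1)) ≥
      (L - Lf) / 2 * ‖x k - x (k + 1)‖ ^ 2 -
        (inner ℝ (x k - x (k + 1)) (ε k) : ℝ) := by
  intro k
  rcases Nat.eq_zero_or_pos N with hN | hN
  · subst hN
    have hsub : Subsingleton (EuclideanSpace ℝ (Fin 0)) := by
      constructor; intro a b; ext i; exact absurd i.2 (Nat.not_lt_zero _)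
    have heq : x k = x (k + 1) := hsub.elim _ _
    rw [heq]
    simp
  -- N ≥ 1 : L > 0
  have hL0 : 0 < L := by
    set e : EuclideanSpace ℝ (Fin N) := EuclideanSpace.single ⟨0, hN⟩ (1:ℝ)
    have h1 := hlip e 0
    have h2 : ‖e - (0 : EuclideanSpace ℝ (Fin N))‖ = 1 := by
      simp [e, EuclideanSpace.norm_single]
    rw [h2, mul_one] at h1
    have := norm_nonneg (gradient f e - gradient f 0)
    linarith
  have hsparse : ∀ j, sparse K (x j) := by
    intro j
    cases j with
    | zero => exact h0
    | succ n => exact (hit n).1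
  set g := gradient f (x k) with hg
  set e := ε k with he
  set d := x (k + 1) - x k with hd
  set w := (1 / L) • (g + e) with hw
  -- minimality
  have hmin := (hit k).2 (x k) (hsparse k)
  have h1 : x (k + 1) - (x k - w) = d + w := by rw [hd, hw]; abel
  have h2 : x k - (x k - w) = w := by abel
  rw [h1, h2] at hmin
  have hsq : ‖d + w‖ ^ 2 ≤ ‖w‖ ^ 2 :=
    pow_le_pow_left₀ (norm_nonneg _) hmin 2
  have hexp : ‖d + w‖ ^ 2 = ‖d‖ ^ 2 + 2 * ⟪d, w⟫ + ‖w‖ ^ 2 := norm_add_sq_real d w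
  have hdw : ‖d‖ ^ 2 + 2 * ⟪d, w⟫ ≤ 0 := by nlinarith [hsq, hexp]
  have hinner_w : ⟪d, w⟫ = (1 / L) * (⟪d, g⟫ + ⟪d, e⟫) := by
    rw [hw, real_inner_smul_right, inner_add_right]
  have hkey : ⟪d, g⟫ + ⟪d, e⟫ ≤ -(L / 2) * ‖d‖ ^ 2 := by
    have hw2 : ⟪d, w⟫ ≤ -(‖d‖ ^ 2) / 2 := by linarith
    have hS : ⟪d, g⟫ + ⟪d, e⟫ = L * ⟪d, w⟫ := by
      rw [hinner_w]; field_simp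
    have hmul := mul_le_mul_of_nonneg_left hw2 hL0.le
    rw [hS]
    nlinarith [hmul]
  -- descent lemma
  have hdesc := descent_lemma f Lf hf hlip (x k) (x (k + 1))
  have hxd : x (k + 1) - x k = d := hd.symm
  rw [hxd] at hdesc
  have hcomm : ⟪g, d⟫ = ⟪d, g⟫ := real_inner_comm _ _
  rw [← hg, hcomm] at hdesc
  -- rewrite goal
  have hnorm : ‖x k - x (k + 1)‖ = ‖d‖ := by
    rw [hd, ← norm_neg]; congr 1; abel
  have hinner_goal : (inner ℝ (x k - x (k + 1)) e : ℝ) = -⟪d, e⟫ := by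
    have : x k - x (k + 1) = -d := by rw [hd]; abel
    rw [this, inner_neg_left]
  rw [hnorm, hinner_goal]
  linarith [hdesc, hkey]
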